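/- Let g : ℝⁿ → ℝᵐ have convex differentiable components, and let (x*, λ*) satisfy λ* ≥ 0, g(x*) ≤ 0, λ* ∘ g(x*) = 0. Then for any x ∈ ℝⁿ and λ ∈ ℝᵐ with λ ≥ 0: (λ - λ*)ᵀ g(x) ≤ (x - x*)ᵀ (∇g(x)λ - ∇g(x*)λ*). -/

import Mathlib

open RealInnerProductSpace

open Finset in
lemma grad_ineq_aux {n : ℕ} {f : EuclideanSpace ℝ (Fin n) → ℝ}
    {f' y : EuclideanSpace ℝ (Fin n)}
    (hc : ConvexOn ℝ Set.univ f) (hf : HasGradientAt f f' y)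
    (z : EuclideanSpace ℝ (Fin n)) :
    f y + ⟪f', z - y⟫ ≤ f z := by
  by_cases hzy : z = y
  · simp [hzy]
  -- restrict to the segment
  set c : ℝ → EuclideanSpace ℝ (Fin n) := fun t => t • (z - y) + y with hcdef
  have hderc : ∀ t : ℝ, HasDerivAt c (z - y) t := by
    intro t
    simpa [hcdef] using ((hasDerivAt_id t).smul_const (z - y)).add_const y
  set φ : ℝ → ℝ := fun t => f (c t) with hφdef
  have hφconv : ConvexOn ℝ Set.univ φ := by
    have haff : ConvexOn ℝ Set.univ (f ∘ (AffineMap.lineMap y z : ℝ →ᵃ[ℝ] _)) := by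
      have := hc.comp_affineMap (AffineMap.lineMap y z : ℝ →ᵃ[ℝ] _)
      simpa using this
    have : ∀ t, c t = AffineMap.lineMap y z t := fun t => by
      simp [hcdef, AffineMap.lineMap_apply]
    simpa [hφdef, funext this, Function.comp_def] using haff
  have hφ' : HasDerivAt φ ⟪f', z - y⟫ 0 := by
    have hF : HasFDerivAt f (InnerProductSpace.toDual ℝ _ f') y :=
      hasGradientAt_iff_hasFDerivAt.mp hf
    have hc0 : c 0 = y := by simp [hcdef]
    have hF' : HasFDerivAt f (InnerProductSpace.toDual ℝ _ f') (c 0) := hc0 ▸ hF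
    have := hF'.comp_hasDerivAt (0:ℝ) (hderc 0)
    simpa [InnerProductSpace.toDual_apply_apply, hφdef, Function.comp_def] using this
  have hslope := hφconv.le_slope_of_hasDerivAt (Set.mem_univ (0:ℝ)) (Set.mem_univ (1:ℝ))
    one_pos hφ'
  have : slope φ 0 1 = φ 1 - φ 0 := by simp [slope]
  rw [this] at hslope
  have h0 : φ 0 = f y := by simp [hφdef, hcdef]
  have h1 : φ 1 = f z := by simp [hφdef, hcdef]
  rw [h0, h1] at hslope
  linarith

/-- Key estimate for the inequality-constraint dual block:
 (λ - λ*)ᵀg(x) ≤ (x - x*)ᵀ(∇g(x)λ - ∇g(x*)λ*). -/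
theorem stmt_8 {n m : ℕ}
    (g : Fin m → EuclideanSpace ℝ (Fin n) → ℝ)
    (gradg : Fin m → EuclideanSpace ℝ (Fin n) → EuclideanSpace ℝ (Fin n))
    (hg : ∀ l, ConvexOn ℝ Set.univ (g l))
    (hg' : ∀ l x, HasGradientAt (g l) (gradg l x) x)
    (xs : EuclideanSpace ℝ (Fin n)) (lams : Fin m → ℝ)
    (hlams : ∀ l, 0 ≤ lams l)
    (hineq : ∀ l, g l xs ≤ 0)
    (hcomp : ∀ l, lams l * g l xs = 0) :
    ∀ (x : EuclideanSpace ℝ (Fin n)) (lam : Fin m → ℝ), (∀ l, 0 ≤ lam l) →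
      (∑ l, (lam l - lams l) * g l x)
        ≤ ∑ i, (x i - xs i) * ((∑ l, lam l * gradg l x i) - (∑ l, lams l * gradg l xs i)) := by
  intro x lam hlam
  have inner_eq : ∀ (w : EuclideanSpace ℝ (Fin n)) (l : Fin m) (v : EuclideanSpace ℝ (Fin n)),
      ⟪gradg l w, (x - xs : EuclideanSpace ℝ (Fin n))⟫
        = ∑ i, (x i - xs i) * gradg l w i := by
    intro w l v
    rw [PiLp.inner_apply]
    refine Finset.sum_congr rfl fun i _ => ?_
    simp [RCLike.inner_apply, PiLp.sub_apply]
  -- per-l inequalities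
  have key1 : ∀ l, g l x - g l xs ≤ ∑ i, (x i - xs i) * gradg l x i := by
    intro l
    have := grad_ineq_aux (hg l) (hg' l x) xs
    have h2 : ⟪gradg l x, (xs - x : EuclideanSpace ℝ (Fin n))⟫
        = - ∑ i, (x i - xs i) * gradg l x i := by
      rw [← inner_eq x l x, ← inner_neg_right, neg_sub]
    rw [h2] at this
    linarith
  have key2 : ∀ l, ∑ i, (x i - xs i) * gradg l xs i ≤ g l x - g l xs := by
    intro l
    have := grad_ineq_aux (hg l) (hg' l xs) x
    rw [inner_eq xs l xs] at this
    linarith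
  -- rewrite RHS as sum over l
  have hrhs : ∑ i, (x i - xs i) * ((∑ l, lam l * gradg l x i) - (∑ l, lams l * gradg l xs i))
      = ∑ l, (lam l * (∑ i, (x i - xs i) * gradg l x i)
              - lams l * (∑ i, (x i - xs i) * gradg l xs i)) := by
    simp_rw [mul_sub, Finset.mul_sum, Finset.sum_sub_distrib]
    congr 1 <;>
      (rw [Finset.sum_comm]
       exact Finset.sum_congr rfl fun l _ => Finset.sum_congr rfl fun i _ => by ring)
  rw [hrhs]
  refine Finset.sum_le_sum fun l _ => ?_
  have h1 : lam l * (g l x - g l xs) ≤ lam l * (∑ i, (x i - xs i) * gradg l x i) :=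
    mul_le_mul_of_nonneg_left (key1 l) (hlam l)
  have h2 : lams l * (∑ i, (x i - xs i) * gradg l xs i) ≤ lams l * (g l x - g l xs) :=
    mul_le_mul_of_nonneg_left (key2 l) (hlams l)
  have h3 : lam l * g l xs ≤ 0 := mul_nonpos_of_nonneg_of_nonpos (hlam l) (hineq l)
  have h4 := hcomp l
  nlinarith
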